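/- Let T be a weighted rooted tree, and let C be a connected cluster of diameter at most Δ containing a vertex r_C that is an ancestor of all vertices of C. Suppose the shortest path from r_C to the portal set P stays within descendants of r_C and all clusters it intersects are assigned to portal p. Then every vertex v ∈ C satisfies d_{T[f^{-1}(p)]}(v, p) ≤ d_T(v, P) + 2Δ, where f^{-1}(p) is the union of the assigned clusters (including C). -/

import Mathlib

/-- Cost of a walk (list of vertices) in a weighted graph with weights `w`. -/
noncomputable def walkCost {V : Type*} (w : V → V → ENNReal) : List V → ENNReal
  | [] => 0
  | [_] => 0
  | a :: b :: l => w a b + walkCost w (b :: l)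

/-- `l` is a walk from `u` to `v` staying inside the vertex set `S`. -/
def IsWalkIn {V : Type*} (S : Set V) (u v : V) (l : List V) : Prop :=
  l.head? = some u ∧ l.getLast? = some v ∧ ∀ x ∈ l, x ∈ S

/-- Shortest-path distance between `u` and `v` in the subgraph induced on `S`
    of the weighted graph with weights `w` (⊤ if there is no walk). -/
noncomputable def gdist {V : Type*} (w : V → V → ENNReal) (S : Set V) (u v : V) : ENNReal :=
  ⨅ (l : List V) (_ : IsWalkIn S u v l), walkCost w l

section Aux
variable {V : Type*} (w : V → V → ENNReal)

lemma walkCost_append (l1 : List V) (m : V) (l2 : List V) :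
    walkCost w (l1 ++ m :: l2) = walkCost w (l1 ++ [m]) + walkCost w (m :: l2) := by
  induction l1 with
  | nil => simp [walkCost]
  | cons a l1 ih =>
    cases l1 with
    | nil => simp [walkCost]
    | cons b rest =>
      simp only [List.cons_append, List.append_eq, walkCost] at *
      rw [ih, add_assoc]

lemma gdist_mono {S S' : Set V} (h : S ⊆ S') (u v : V) :
    gdist w S' u v ≤ gdist w S u v := by
  refine le_iInf₂ fun l hl => ?_
  exact iInf₂_le l ⟨hl.1, hl.2.1, fun x hx => h (hl.2.2 x hx)⟩

lemma isWalkIn_concat {S : Set V} {u m v : V} {l1 l2 : List V}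
    (h1 : IsWalkIn S u m l1) (h2 : IsWalkIn S m v l2) :
    IsWalkIn S u v (l1 ++ l2.tail) ∧
      walkCost w (l1 ++ l2.tail) = walkCost w l1 + walkCost w l2 := by
  obtain ⟨h1h, h1l, h1m⟩ := h1
  obtain ⟨h2h, h2l, h2m⟩ := h2
  have hl1ne : l1 ≠ [] := by rintro rfl; simp at h1h
  obtain ⟨t, rfl⟩ : ∃ t, l2 = m :: t := by
    cases l2 with
    | nil => simp at h2h
    | cons a t =>
      simp only [List.head?_cons, Option.some.injEq] at h2h
      exact ⟨t, by rw [h2h]⟩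
  have hlast : l1.getLast hl1ne = m := by
    rw [List.getLast?_eq_getLast hl1ne] at h1l; exact Option.some_injective _ h1l
  have hdecomp : l1 = l1.dropLast ++ [m] := by
    conv_lhs => rw [← List.dropLast_append_getLast hl1ne, hlast]
  constructor
  · refine ⟨?_, ?_, ?_⟩
    · cases l1 with
      | nil => exact absurd rfl hl1ne
      | cons a l => simpa using h1h
    · cases t with
      | nil =>
        simp only [List.tail_cons, List.append_nil]
        rw [h1l]
        simpa using h2l
      | cons b t' =>
        simp only [List.tail_cons]
        have h2l' : (b :: t').getLast? = some v := by simpa using h2l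
        rw [List.getLast?_append, h2l']
        rfl
    · intro x hx
      rcases List.mem_append.1 hx with hx | hx
      · exact h1m x hx
      · exact h2m x (List.mem_cons_of_mem _ (by simpa using hx))
  · simp only [List.tail_cons]
    conv_lhs => rw [hdecomp]
    rw [List.append_assoc, List.singleton_append, walkCost_append, ← hdecomp]

lemma gdist_triangle (S : Set V) (u m v : V) :
    gdist w S u v ≤ gdist w S u m + gdist w S m v := by
  have key : ∀ l1, IsWalkIn S u m l1 → ∀ l2, IsWalkIn S m v l2 →
      gdist w S u v ≤ walkCost w l1 + walkCost w l2 := by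
    intro l1 h1 l2 h2
    obtain ⟨hw, hc⟩ := isWalkIn_concat w h1 h2
    rw [← hc]
    exact iInf₂_le _ hw
  have heq : gdist w S u m + gdist w S m v =
      ⨅ (l2 : List V) (_ : IsWalkIn S m v l2) (l1 : List V) (_ : IsWalkIn S u m l1),
        (walkCost w l1 + walkCost w l2) := by
    rw [gdist, gdist]
    simp only [ENNReal.iInf_add, ENNReal.add_iInf]
  rw [heq]
  exact le_iInf₂ fun l2 h2 => le_iInf₂ fun l1 h1 => key l1 h1 l2 h2

lemma walkCost_reverse (hwsymm : ∀ u v, w u v = w v u) (l : List V) :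
    walkCost w l.reverse = walkCost w l := by
  induction l with
  | nil => rfl
  | cons a l ih =>
    cases l with
    | nil => rfl
    | cons b l' =>
      have hd : (b :: l').reverse = (b :: l').reverse.dropLast ++ [b] := by
        conv_lhs => rw [← List.dropLast_append_getLast (l := (b::l').reverse) (by simp),
          List.getLast_reverse]
        simp
      calc walkCost w (a :: b :: l').reverse
          = walkCost w ((b :: l').reverse.dropLast ++ b :: [a]) := by
            rw [List.reverse_cons]; conv_lhs => rw [hd]
            rw [List.append_assoc]; rfl
        _ = walkCost w ((b :: l').reverse.dropLast ++ [b]) + walkCost w [b, a] :=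
            walkCost_append w _ b [a]
        _ = walkCost w (b :: l') + w b a := by rw [← hd, ih]; simp [walkCost]
        _ = walkCost w (a :: b :: l') := by
            rw [hwsymm b a, walkCost]; exact (add_comm _ _)

lemma gdist_symm (hwsymm : ∀ u v, w u v = w v u) (S : Set V) (u v : V) :
    gdist w S u v = gdist w S v u := by
  have key : ∀ u v, gdist w S u v ≤ gdist w S v u := by
    intro u v
    refine le_iInf₂ fun l hl => ?_
    have : IsWalkIn S u v l.reverse :=
      ⟨by rw [List.head?_reverse]; exact hl.2.1,
       by rw [List.getLast?_reverse]; exact hl.1,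
       fun x hx => hl.2.2 x (List.mem_reverse.1 hx)⟩
    calc gdist w S u v ≤ walkCost w l.reverse := iInf₂_le _ this
      _ = walkCost w l := walkCost_reverse w hwsymm l
  exact le_antisymm (key u v) (key v u)

end Aux

/-- Monotone-cluster case on a weighted tree: C is a connected cluster of
    diameter ≤ Δ with root-most vertex r_C, contained in the union A of clusters assigned
    to portal p, and the shortest path from r_C to the portal set P realizes d(r_C,P)
    inside A (it stays among descendants of r_C, all assigned to p).  Then every v ∈ C
    satisfies d_{T[A]}(v,p) ≤ d_T(v,P) + 2Δ. -/
theorem stmt10 {V : Type*} [Fintype V] (T : SimpleGraph V) (hT : T.IsTree)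
    (w : V → V → ENNReal)
    (hwsymm : ∀ u v, w u v = w v u)
    (hwE : ∀ u v, ¬ T.Adj u v → w u v = ⊤)
    (P C A : Set V) (hCA : C ⊆ A) (Δ : ENNReal)
    (v rC : V) (hv : v ∈ C) (hrC : rC ∈ C)
    (hdiam : ∀ x ∈ C, ∀ y ∈ C, gdist w C x y ≤ Δ)
    (p : V) (hp : p ∈ P) (hpA : p ∈ A)
    (hpath : gdist w A rC p = ⨅ q ∈ P, gdist w Set.univ rC q) :
    gdist w A v p ≤ (⨅ q ∈ P, gdist w Set.univ v q) + 2 * Δ := by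
  have h1 := gdist_triangle w A v rC p
  have h2 : gdist w A v rC ≤ Δ := le_trans (gdist_mono w hCA v rC) (hdiam v hv rC hrC)
  have h4 : gdist w Set.univ rC v ≤ Δ :=
    le_trans (gdist_mono w (Set.subset_univ C) rC v) (hdiam rC hrC v hv)
  have h3 : gdist w A rC p ≤ Δ + ⨅ q ∈ P, gdist w Set.univ v q := by
    rw [hpath]
    have step : ∀ q ∈ P, gdist w Set.univ rC q ≤ Δ + gdist w Set.univ v q :=
      fun q _ => le_trans (gdist_triangle w Set.univ rC v q) (add_le_add_left h4 _)
    calc (⨅ q ∈ P, gdist w Set.univ rC q) ≤ ⨅ q ∈ P, (Δ + gdist w Set.univ v q) :=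
        iInf₂_mono step
      _ = Δ + ⨅ q ∈ P, gdist w Set.univ v q := by simp only [ENNReal.add_iInf]
  calc gdist w A v p ≤ gdist w A v rC + gdist w A rC p := h1
    _ ≤ Δ + (Δ + ⨅ q ∈ P, gdist w Set.univ v q) := add_le_add h2 h3
    _ = (⨅ q ∈ P, gdist w Set.univ v q) + 2 * Δ := by rw [two_mul]; ring
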